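/- Let M > 0 and let f : ℝ → ℝ be three times differentiable with continuous third derivative, with f''(s) ≥ 0 and |f'''(s)| ≤ M·f''(s) for all s ∈ ℝ. Then for all x, y ∈ ℝ, e^{−M·|x−y|}·f''(x) ≤ f''(y) ≤ e^{M·|x−y|}·f''(x). -/

import Mathlib

/-- If `g` is differentiable, `|g'| ≤ M g`, then `t ↦ exp(M t) * g t` is monotone. -/
lemma qsc_aux_mono (M : ℝ) (g : ℝ → ℝ) (hg : Differentiable ℝ g)
    (hb : ∀ s : ℝ, |deriv g s| ≤ M * g s) :
    Monotone (fun t => Real.exp (M * t) * g t) := by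
  have hd : ∀ t : ℝ, HasDerivAt (fun t => Real.exp (M * t) * g t)
      (Real.exp (M * t) * M * g t + Real.exp (M * t) * deriv g t) t := by
    intro t
    have h1 : HasDerivAt (fun t : ℝ => Real.exp (M * t)) (Real.exp (M * t) * M) t := by
      have := ((hasDerivAt_id t).const_mul M).exp
      simpa using this
    exact h1.mul (hg t).hasDerivAt
  apply monotone_of_deriv_nonneg
  · exact fun t => (hd t).differentiableAt
  · intro t
    rw [(hd t).deriv]
    have h2 : -(M * g t) ≤ deriv g t := neg_le_of_abs_le (hb t)
    nlinarith [Real.exp_pos (M * t)]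

/-- If `g` is differentiable, `|g'| ≤ M g`, then `t ↦ exp(-(M t)) * g t` is antitone. -/
lemma qsc_aux_anti (M : ℝ) (g : ℝ → ℝ) (hg : Differentiable ℝ g)
    (hb : ∀ s : ℝ, |deriv g s| ≤ M * g s) :
    Antitone (fun t => Real.exp (-(M * t)) * g t) := by
  have hd : ∀ t : ℝ, HasDerivAt (fun t => Real.exp (-(M * t)) * g t)
      (Real.exp (-(M * t)) * (-M) * g t + Real.exp (-(M * t)) * deriv g t) t := by
    intro t
    have h1 : HasDerivAt (fun t : ℝ => Real.exp (-(M * t))) (Real.exp (-(M * t)) * (-M)) t := by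
      have := (((hasDerivAt_id t).const_mul M).neg).exp
      simpa using this
    exact h1.mul (hg t).hasDerivAt
  apply antitone_of_deriv_nonpos
  · exact fun t => (hd t).differentiableAt
  · intro t
    rw [(hd t).deriv]
    have h2 : deriv g t ≤ M * g t := le_of_abs_le (hb t)
    nlinarith [Real.exp_pos (-(M * t))]

/-- Hessian stability for univariate M-q.s.c. functions:
e^{−M|x−y|}·f''(x) ≤ f''(y) ≤ e^{M|x−y|}·f''(x). -/
theorem qsc_hessian_stable
    (M : ℝ) (hM : 0 < M) (f : ℝ → ℝ) (hf : ContDiff ℝ 3 f)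
    (hpos : ∀ s : ℝ, 0 ≤ deriv (deriv f) s)
    (hqsc : ∀ s : ℝ, |deriv (deriv (deriv f)) s| ≤ M * deriv (deriv f) s) :
    ∀ x y : ℝ,
      Real.exp (-(M * |x - y|)) * deriv (deriv f) x ≤ deriv (deriv f) y ∧
      deriv (deriv f) y ≤ Real.exp (M * |x - y|) * deriv (deriv f) x := by
  set g := deriv (deriv f) with hgdef
  have hg : Differentiable ℝ g := by
    have h0 : ContDiff ℝ (2+1) f := by exact_mod_cast hf
    have h1 : ContDiff ℝ 2 (deriv f) := (contDiff_succ_iff_deriv.mp h0).2.2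
    have h1' : ContDiff ℝ (1+1) (deriv f) := by exact_mod_cast h1
    exact (contDiff_succ_iff_deriv.mp h1').2.2.differentiable one_ne_zero
  have hb : ∀ s : ℝ, |deriv g s| ≤ M * g s := hqsc
  have hmono := qsc_aux_mono M g hg hb
  have hanti := qsc_aux_anti M g hg hb
  intro x y
  have hex := Real.exp_pos
  rcases le_total x y with h | h
  · have habs : |x - y| = y - x := by rw [abs_sub_comm]; exact abs_of_nonneg (by linarith)
    constructor
    · have := hmono h
      simp only at this
      -- exp(Mx) g x ≤ exp(My) g y
      rw [habs]
      have hpos' := Real.exp_pos (M * y)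
      rw [show -(M * (y - x)) = M * x - M * y by ring, Real.exp_sub, div_mul_eq_mul_div,
        div_le_iff₀ hpos']
      calc Real.exp (M * x) * g x ≤ Real.exp (M * y) * g y := this
        _ = g y * Real.exp (M * y) := by ring
    · have := hanti h
      simp only at this
      rw [habs]
      have hpos' := Real.exp_pos (M * y)
      have : g y ≤ Real.exp (M * y) * (Real.exp (-(M * x)) * g x) := by
        rw [← mul_assoc]
        calc g y = Real.exp (M * y) * (Real.exp (-(M * y)) * g y) := by
              rw [← mul_assoc, ← Real.exp_add]; simp
          _ ≤ Real.exp (M * y) * Real.exp (-(M * x)) * g x := by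
              rw [mul_assoc]
              exact mul_le_mul_of_nonneg_left this (le_of_lt hpos')
      calc g y ≤ Real.exp (M * y) * Real.exp (-(M * x)) * g x := by
            rw [mul_assoc]; exact this
        _ = Real.exp (M * (y - x)) * g x := by rw [← Real.exp_add]; ring_nf
  · have habs : |x - y| = x - y := abs_of_nonneg (by linarith)
    constructor
    · have := hanti h
      simp only at this
      -- exp(-Mx) g x ≤ exp(-My) g y
      rw [habs]
      calc Real.exp (-(M * (x - y))) * g x
          = Real.exp (M * y) * (Real.exp (-(M * x)) * g x) := by
            rw [← mul_assoc, ← Real.exp_add]; ring_nf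
        _ ≤ Real.exp (M * y) * (Real.exp (-(M * y)) * g y) :=
            mul_le_mul_of_nonneg_left this (le_of_lt (Real.exp_pos _))
        _ = g y := by rw [← mul_assoc, ← Real.exp_add]; simp
    · have := hmono h
      simp only at this
      -- exp(My) g y ≤ exp(Mx) g x
      rw [habs]
      calc g y = Real.exp (-(M * y)) * (Real.exp (M * y) * g y) := by
            rw [← mul_assoc, ← Real.exp_add]; simp
        _ ≤ Real.exp (-(M * y)) * (Real.exp (M * x) * g x) :=
            mul_le_mul_of_nonneg_left this (le_of_lt (Real.exp_pos _))
        _ = Real.exp (M * (x - y)) * g x := by rw [← mul_assoc, ← Real.exp_add]; ring_nf
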